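/- Let T be a locally finite tree with no terminal vertices, A a finitely supported antisymmetric ℤ-valued function on oriented edges of T, and τ a finite subtree containing the support of A. Then the following are equivalent: (1) for every bi-infinite proper edge path c in T, the sum c·A lies in {-1,0,1}; (2) for every finite edge path ξ in τ with endpoints on the boundary of τ, the sum ξ·A lies in {-1,0,1}. -/

import Mathlib

/-- A bi-infinite proper edge path in a graph. -/
def IsProperBiInfPath {V : Type*} (G : SimpleGraph V) (c : ℤ → V) : Prop :=
  (∀ n : ℤ, G.Adj (c n) (c (n + 1))) ∧
    ∀ S : Finset V, ∃ N : ℕ, ∀ n : ℤ, (N : ℤ) ≤ |n| → c n ∉ S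

open SimpleGraph

namespace EmbCritAux

variable {V : Type*} {G : SimpleGraph V}


variable {V : Type*} {G : SimpleGraph V}

/-- weight of a walk w.r.t. an edge-weight function. -/
def wt (A : V × V → ℤ) {u v : V} (p : G.Walk u v) : ℤ :=
  (p.darts.map (fun d => A d.toProd)).sum

@[simp] lemma wt_nil (A : V × V → ℤ) {u : V} : wt A (Walk.nil : G.Walk u u) = 0 := rfl

@[simp] lemma wt_cons (A : V × V → ℤ) {u v w : V} (h : G.Adj u v) (p : G.Walk v w) :
    wt A (Walk.cons h p) = A (u, v) + wt A p := by
  simp [wt, Walk.darts_cons]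

@[simp] lemma wt_append (A : V × V → ℤ) {u v w : V} (p : G.Walk u v) (q : G.Walk v w) :
    wt A (p.append q) = wt A p + wt A q := by
  simp [wt, Walk.darts_append]

@[simp] lemma wt_concat (A : V × V → ℤ) {u v w : V} (p : G.Walk u v) (h : G.Adj v w) :
    wt A (p.concat h) = wt A p + A (v, w) := by
  simp [Walk.concat_eq_append]

lemma path_eq (hT : G.IsTree) {u v : V} {p q : G.Walk u v} (hp : p.IsPath) (hq : q.IsPath) :
    p = q := by
  obtain ⟨r, _, hr⟩ := hT.existsUnique_path u v
  rw [hr p hp, hr q hq]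

lemma isPath_concat {u v w : V} {p : G.Walk u v} (hp : p.IsPath) (h : G.Adj v w)
    (hw : w ∉ p.support) : (p.concat h).IsPath := by
  rw [← Walk.isPath_reverse_iff, Walk.reverse_concat, Walk.cons_isPath_iff]
  exact ⟨Walk.isPath_reverse_iff _ |>.2 hp, by simpa [Walk.support_reverse] using hw⟩

lemma singleton_isPath {u v : V} (h : G.Adj u v) : (Walk.cons h Walk.nil).IsPath := by
  simp [Walk.cons_isPath_iff, h.ne]

/-- gradient property of path weights in a tree, for antisymmetric A. -/
lemma grad (hT : G.IsTree) (A : V × V → ℤ) (hanti : ∀ u v : V, A (u, v) = -A (v, u))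
    {root u v : V} (h : G.Adj u v) (pu : G.Walk root u) (pv : G.Walk root v)
    (hpu : pu.IsPath) (hpv : pv.IsPath) : A (u, v) = wt A pv - wt A pu := by
  classical
  by_cases hv : v ∈ pu.support
  · have ht : (pu.takeUntil v hv).IsPath := hpu.takeUntil hv
    have hd : (pu.dropUntil v hv).IsPath := hpu.dropUntil hv
    have hpv' : pv = pu.takeUntil v hv := path_eq hT hpv ht
    have hd' : pu.dropUntil v hv = Walk.cons h.symm Walk.nil :=
      path_eq hT hd (singleton_isPath h.symm)
    have hspec := pu.take_spec hv
    have : wt A pu = wt A (pu.takeUntil v hv) + wt A (pu.dropUntil v hv) := by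
      have h2 := congrArg (wt A) hspec
      rw [wt_append] at h2
      exact h2.symm
    rw [this, hd', hpv']
    simp [hanti u v]
  · have hq : (pu.concat h).IsPath := isPath_concat hpu h hv
    have : pv = pu.concat h := path_eq hT hpv hq
    rw [this]
    simp

lemma bdry {τ : Finset V} (φ : V → ℤ)
    (hstep : ∀ u v : V, G.Adj u v → u ∉ τ → φ v = φ u) :
    ∀ (x t0 : V) (p : G.Walk x t0), t0 ∈ τ → x ∉ τ →
      ∃ b, b ∈ τ ∧ (∃ w, w ∉ τ ∧ G.Adj b w) ∧ φ x = φ b := by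
  intro x t0 p
  induction p with
  | nil => intro ht0 hx; exact absurd ht0 hx
  | @cons a b c hab q ih =>
      intro ht0 ha
      have hfab : φ b = φ a := hstep a b hab ha
      by_cases hb : b ∈ τ
      · exact ⟨b, hb, ⟨a, ha, hab.symm⟩, hfab.symm⟩
      · obtain ⟨d, hd1, hd2, hd3⟩ := ih ht0 hb
        exact ⟨d, hd1, hd2, by rw [← hfab, hd3]⟩

section ray

variable [∀ v : V, Fintype (G.neighborSet v)]

variable (G) in
noncomputable def nextV (hdeg : ∀ v : V, 2 ≤ G.degree v) (v a : V) : V :=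
  (Finset.exists_mem_ne
    (lt_of_lt_of_le one_lt_two (hdeg v) : 1 < (G.neighborFinset v).card) a).choose

lemma nextV_adj (hdeg : ∀ v : V, 2 ≤ G.degree v) (v a : V) : G.Adj v (nextV G hdeg v a) :=
  (G.mem_neighborFinset v _).1 (Finset.exists_mem_ne
    (lt_of_lt_of_le one_lt_two (hdeg v) : 1 < (G.neighborFinset v).card) a).choose_spec.1

lemma nextV_ne (hdeg : ∀ v : V, 2 ≤ G.degree v) (v a : V) : nextV G hdeg v a ≠ a :=
  (Finset.exists_mem_ne
    (lt_of_lt_of_le one_lt_two (hdeg v) : 1 < (G.neighborFinset v).card) a).choose_spec.2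

variable (G) in
noncomputable def rayAux (hdeg : ∀ v : V, 2 ≤ G.degree v) (x y : V) : ℕ → V × V
  | 0 => (x, y)
  | k + 1 => ((rayAux hdeg x y k).2, nextV G hdeg (rayAux hdeg x y k).2 (rayAux hdeg x y k).1)

variable (G) in
noncomputable def ray (hdeg : ∀ v : V, 2 ≤ G.degree v) (x y : V) (k : ℕ) : V :=
  (rayAux G hdeg x y k).1

variable {hdeg : ∀ v : V, 2 ≤ G.degree v} {x y : V}

@[simp] lemma ray_zero : ray G hdeg x y 0 = x := rfl

@[simp] lemma ray_one : ray G hdeg x y 1 = y := rfl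

lemma ray_succ_eq (k : ℕ) : ray G hdeg x y (k + 1) = (rayAux G hdeg x y k).2 := rfl

lemma ray_adj (hxy : G.Adj x y) (k : ℕ) :
    G.Adj (ray G hdeg x y k) (ray G hdeg x y (k + 1)) := by
  cases k with
  | zero => exact hxy
  | succ k =>
      rw [ray_succ_eq, ray_succ_eq]
      show G.Adj _ (nextV G hdeg _ _)
      exact nextV_adj hdeg _ _

lemma ray_ne_two (k : ℕ) : ray G hdeg x y (k + 2) ≠ ray G hdeg x y k := by
  cases k with
  | zero =>
      show (rayAux G hdeg x y 1).2 ≠ x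
      exact nextV_ne hdeg _ _
  | succ k =>
      rw [ray_succ_eq]
      show nextV G hdeg _ _ ≠ _
      exact nextV_ne hdeg _ _

noncomputable def rayWalk (hxy : G.Adj x y) (hdeg : ∀ v : V, 2 ≤ G.degree v) :
    (k : ℕ) → G.Walk x (ray G hdeg x y k)
  | 0 => Walk.nil
  | k + 1 => (rayWalk hxy hdeg k).concat (ray_adj hxy k)

lemma rayWalk_support (hxy : G.Adj x y) (k : ℕ) :
    (rayWalk hxy hdeg k).support = (List.range (k + 1)).map (ray G hdeg x y) := by
  induction k with
  | zero => rw [rayWalk]; rw [show List.range 1 = [0] from rfl]; simp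
  | succ k ih =>
      rw [rayWalk, Walk.support_concat, ih]
      simp [List.range_succ]

lemma rayWalk_isPath (hxy : G.Adj x y) (hT : G.IsTree) (k : ℕ) : (rayWalk hxy hdeg k).IsPath := by
  classical
  induction k with
  | zero => exact Walk.IsPath.nil
  | succ k ih =>
      refine isPath_concat ih _ ?_
      intro hmem
      set p := rayWalk hxy hdeg k with hp
      have hq : (p.dropUntil _ hmem).IsPath := ih.dropUntil hmem
      have hedge : (Walk.cons (ray_adj hxy k).symm Walk.nil :
          G.Walk (ray G hdeg x y (k + 1)) (ray G hdeg x y k)).IsPath :=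
        singleton_isPath _
      have hqe : p.dropUntil _ hmem = Walk.cons (ray_adj hxy k).symm Walk.nil :=
        path_eq hT hq hedge
      have hsupp : p.support =
          (p.takeUntil _ hmem).support ++ (p.dropUntil _ hmem).support.tail := by
        conv_lhs => rw [← p.take_spec hmem]
        rw [Walk.support_append]
      rw [hqe] at hsupp
      simp only [Walk.support_cons, Walk.support_nil, List.tail_cons] at hsupp
      have hps := rayWalk_support hxy (hdeg := hdeg) k
      rw [← hp] at hps
      have hrange : (List.range (k + 1)).map (ray G hdeg x y)
          = (List.range k).map (ray G hdeg x y) ++ [ray G hdeg x y k] := by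
        rw [List.range_succ]; simp
      have hts : (p.takeUntil _ hmem).support = (List.range k).map (ray G hdeg x y) := by
        apply List.append_cancel_right (bs := [ray G hdeg x y k])
        rw [← hsupp, hps, hrange]
      cases k with
      | zero =>
          exact (p.takeUntil _ hmem).support_ne_nil (by simpa using hts)
      | succ j =>
          have hlast : (p.takeUntil _ hmem).support.getLast (by simp) =
              ray G hdeg x y (j + 2) := Walk.getLast_support _
          have h2 : (p.takeUntil _ hmem).support.getLast? = some (ray G hdeg x y (j + 2)) := by
            rw [List.getLast?_eq_getLast (l := (p.takeUntil _ hmem).support) (by simp), hlast]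
          rw [hts, List.range_succ] at h2
          simp only [List.map_append, List.map_cons, List.map_nil, List.getLast?_concat] at h2
          have h3 : ray G hdeg x y j = ray G hdeg x y (j + 2) := by injection h2
          exact ray_ne_two j h3.symm

lemma ray_injective (hxy : G.Adj x y) (hT : G.IsTree) : Function.Injective (ray G hdeg x y) := by
  intro i j hij
  by_contra hne
  have hp := rayWalk_isPath (hdeg := hdeg) hxy hT (max i j + 1)
  have hs := rayWalk_support hxy (hdeg := hdeg) (max i j + 1)
  rw [Walk.isPath_def, hs] at hp
  exact hne (List.inj_on_of_nodup_map hp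
    (List.mem_range.2 (by omega : i < max i j + 2))
    (List.mem_range.2 (by omega : j < max i j + 2)) hij)

lemma ray_avoid (hxy : G.Adj x y) (hT : G.IsTree) (τ : Finset V)
    (hτconn : (G.induce (τ : Set V)).Connected) (hx : x ∈ τ) (hy : y ∉ τ)
    (k : ℕ) (hk : 1 ≤ k) : ray G hdeg x y k ∉ τ := by
  classical
  intro hmem
  have hreach := hτconn.preconnected ⟨x, by simpa using hx⟩ ⟨ray G hdeg x y k, by simpa using hmem⟩
  obtain ⟨w0⟩ := hreach
  have hw : ∀ z ∈ (w0.map (SimpleGraph.Embedding.induce (τ : Set V)).toHom).support, z ∈ τ := by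
    intro z hz
    rw [Walk.support_map] at hz
    obtain ⟨z', _, rfl⟩ := List.mem_map.1 hz
    exact z'.2
  set w := w0.map (SimpleGraph.Embedding.induce (τ : Set V)).toHom with hwdef
  have hbp : w.bypass = rayWalk hxy hdeg k :=
    path_eq hT w.bypass_isPath (rayWalk_isPath (hdeg := hdeg) hxy hT k)
  have hyy : y ∈ (rayWalk hxy hdeg k).support := by
    rw [rayWalk_support]
    exact List.mem_map.2 ⟨1, List.mem_range.2 (by omega), ray_one⟩
  rw [← hbp] at hyy
  exact hy (hw _ (w.support_bypass_subset hyy))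

end ray


end EmbCritAux

/-- Finiteness reduction for the embeddedness criterion: all bi-infinite proper
paths have intersection number with `A` in `{-1,0,1}` iff all finite edge paths
in `τ` with endpoints on the boundary of `τ` do. -/
theorem embedded_criterion_finite_check {V : Type*} (G : SimpleGraph V)
    (hT : G.IsTree) [∀ v : V, Fintype (G.neighborSet v)]
    (hdeg : ∀ v : V, 2 ≤ G.degree v)
    (A : V × V → ℤ)
    (hanti : ∀ u v : V, A (u, v) = -A (v, u))
    (τ : Finset V) (hτconn : (G.induce (τ : Set V)).Connected)
    (hsupp : ∀ u v : V, A (u, v) ≠ 0 → G.Adj u v ∧ u ∈ τ ∧ v ∈ τ) :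
    (∀ c : ℤ → V, IsProperBiInfPath G c →
        (∑ᶠ n : ℤ, A (c n, c (n + 1))) ∈ ({-1, 0, 1} : Set ℤ)) ↔
    (∀ (m : ℕ) (ξ : ℕ → V),
        (∀ i ≤ m, ξ i ∈ τ) → (∀ i < m, G.Adj (ξ i) (ξ (i + 1))) →
        (∃ w, w ∉ τ ∧ G.Adj (ξ 0) w) → (∃ w, w ∉ τ ∧ G.Adj (ξ m) w) →
        (∑ i ∈ Finset.range m, A (ξ i, ξ (i + 1))) ∈ ({-1, 0, 1} : Set ℤ)) := by
  classical
  open EmbCritAux in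
  obtain ⟨⟨t0, ht0'⟩⟩ := hτconn.nonempty
  have ht0 : t0 ∈ τ := by simpa using ht0'
  have hA0 : ∀ u v : V, u ∉ τ ∨ v ∉ τ → A (u, v) = 0 := by
    intro u v h
    by_contra hne
    obtain ⟨_, h1, h2⟩ := hsupp u v hne
    tauto
  set φ : V → ℤ := fun v => wt A ((hT.isConnected.preconnected t0 v).some.bypass) with hφ
  have hgrad : ∀ u v : V, G.Adj u v → A (u, v) = φ v - φ u := by
    intro u v h
    exact grad hT A hanti h _ _ (Walk.bypass_isPath _) (Walk.bypass_isPath _)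
  have htel : ∀ (g : ℕ → V) (m : ℕ), (∀ i < m, G.Adj (g i) (g (i + 1))) →
      ∑ i ∈ Finset.range m, A (g i, g (i + 1)) = φ (g m) - φ (g 0) := by
    intro g m
    induction m with
    | zero => simp
    | succ m ih =>
        intro h
        rw [Finset.sum_range_succ, ih (fun i hi => h i (by omega)),
          hgrad _ _ (h m (by omega))]
        ring
  have hbdry : ∀ x : V, x ∉ τ → ∃ b, b ∈ τ ∧ (∃ w, w ∉ τ ∧ G.Adj b w) ∧ φ x = φ b := by
    intro x hx
    refine bdry φ ?_ x t0 (hT.isConnected.preconnected x t0).some ht0 hx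
    intro u v h hu
    have h1 := hgrad u v h
    have h2 := hA0 u v (Or.inl hu)
    omega
  constructor
  · rintro h1 m ξ hξτ hξadj ⟨w0, hw0τ, hw0adj⟩ ⟨w1, hw1τ, hw1adj⟩
    set r0 : ℕ → V := ray G hdeg (ξ 0) w0 with hr0
    set r1 : ℕ → V := ray G hdeg (ξ m) w1 with hr1
    set c : ℤ → V := fun n =>
      if n < 0 then r0 (-n).toNat else if n ≤ (m : ℤ) then ξ n.toNat else r1 (n - m).toNat
      with hc
    have hcneg : ∀ n : ℤ, n < 0 → c n = r0 (-n).toNat := by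
      intro n h; simp only [hc]; rw [if_pos h]
    have hcmid : ∀ n : ℤ, 0 ≤ n → n ≤ (m : ℤ) → c n = ξ n.toNat := by
      intro n h1 h2; simp only [hc]; rw [if_neg (by omega), if_pos h2]
    have hcpos : ∀ n : ℤ, (m : ℤ) < n → c n = r1 (n - m).toNat := by
      intro n h; simp only [hc]; rw [if_neg (by omega), if_neg (by omega)]
    have hcnat : ∀ i : ℕ, i ≤ m → c i = ξ i := by
      intro i hi
      rw [hcmid i (by omega) (by omega)]
      simp
    have hr0one : c (-1) = w0 := by rw [hcneg (-1) (by omega)]; simp [hr0]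
    have hadjc : ∀ n : ℤ, G.Adj (c n) (c (n + 1)) := by
      intro n
      rcases lt_trichotomy n (-1) with h | h | h
      · rw [hcneg n (by omega), hcneg (n + 1) (by omega)]
        have hk : (-n).toNat = (-(n + 1)).toNat + 1 := by omega
        rw [hk]
        exact (ray_adj hw0adj _).symm
      · subst h
        rw [hr0one, show (-1 : ℤ) + 1 = 0 from rfl, hcmid 0 le_rfl (by omega)]
        have : (0 : ℤ).toNat = 0 := rfl
        rw [this]
        exact hw0adj.symm
      · rcases lt_trichotomy n (m : ℤ) with h2 | h2 | h2
        · rw [hcmid n (by omega) (by omega), hcmid (n + 1) (by omega) (by omega)]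
          have hk : (n + 1).toNat = n.toNat + 1 := by omega
          rw [hk]
          exact hξadj n.toNat (by omega)
        · subst h2
          rw [hcmid _ (by omega) le_rfl, hcpos ((m : ℤ) + 1) (by omega)]
          have h3 : ((m : ℤ)).toNat = m := by omega
          have h4 : ((m : ℤ) + 1 - m).toNat = 1 := by omega
          rw [h3, h4]
          simpa [hr1] using hw1adj
        · rw [hcpos n h2, hcpos (n + 1) (by omega)]
          have hk : (n + 1 - m).toNat = (n - m).toNat + 1 := by omega
          rw [hk]
          exact ray_adj hw1adj _
    have hproper : ∀ S : Finset V, ∃ N : ℕ, ∀ n : ℤ, (N : ℤ) ≤ |n| → c n ∉ S := by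
      intro S
      have hfin0 : (r0 ⁻¹' (S : Set V)).Finite :=
        Set.Finite.preimage (ray_injective hw0adj hT).injOn S.finite_toSet
      have hfin1 : (r1 ⁻¹' (S : Set V)).Finite :=
        Set.Finite.preimage (ray_injective hw1adj hT).injOn S.finite_toSet
      obtain ⟨B0, hB0⟩ := hfin0.bddAbove
      obtain ⟨B1, hB1⟩ := hfin1.bddAbove
      refine ⟨B0 + B1 + m + 1, fun n hn hS => ?_⟩
      rcases le_abs.mp hn with h | h
      · push_cast at h
        rw [hcpos n (by omega)] at hS
        have := hB1 (Set.mem_preimage.2 (by simpa using hS))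
        omega
      · push_cast at h
        rw [hcneg n (by omega)] at hS
        have := hB0 (Set.mem_preimage.2 (by simpa using hS))
        omega
    have hsum : (∑ᶠ n : ℤ, A (c n, c (n + 1))) = ∑ i ∈ Finset.range m, A (ξ i, ξ (i + 1)) := by
      have hsub : Function.support (fun n : ℤ => A (c n, c (n + 1))) ⊆
          ((Finset.range m).image (fun i : ℕ => (i : ℤ)) : Finset ℤ) := by
        intro n hn
        simp only [Function.mem_support] at hn
        obtain ⟨-, hn1, hn2⟩ := hsupp _ _ hn
        rcases lt_trichotomy n 0 with h | h | h
        · exfalso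
          rw [hcneg n h] at hn1
          exact ray_avoid hw0adj hT τ hτconn (hξτ 0 (by omega)) hw0τ _ (by omega) hn1
        · subst h
          by_cases hm : m = 0
          · exfalso
            rw [show (0 : ℤ) + 1 = 1 from rfl, hcpos 1 (by omega)] at hn2
            exact ray_avoid hw1adj hT τ hτconn (hξτ m le_rfl) hw1τ _ (by omega) hn2
          · simp only [Finset.coe_image, Set.mem_image, Finset.mem_coe, Finset.mem_range]
            exact ⟨0, by omega, rfl⟩
        · rcases le_or_gt (m : ℤ) n with h2 | h2
          · exfalso
            rw [hcpos (n + 1) (by omega)] at hn2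
            exact ray_avoid hw1adj hT τ hτconn (hξτ m le_rfl) hw1τ _ (by omega) hn2
          · simp only [Finset.coe_image, Set.mem_image, Finset.mem_coe, Finset.mem_range]
            exact ⟨n.toNat, by omega, by omega⟩
      rw [finsum_eq_sum_of_support_subset _ hsub, Finset.sum_image
        (by intro a _ b _ h; simp only at h; exact_mod_cast h)]
      apply Finset.sum_congr rfl
      intro i hi
      rw [Finset.mem_range] at hi
      rw [hcnat i (by omega), show ((i : ℤ) + 1) = ((i + 1 : ℕ) : ℤ) by push_cast; ring,
        hcnat (i + 1) (by omega)]
    rw [← hsum]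
    exact h1 c ⟨hadjc, hproper⟩
  · rintro h2 c ⟨hcadj, hcprop⟩
    obtain ⟨N, hN⟩ := hcprop τ
    set a : ℤ := -(N : ℤ) with ha
    have hsub : Function.support (fun n : ℤ => A (c n, c (n + 1))) ⊆
        ((Finset.range (2 * N)).image (fun i : ℕ => a + i) : Finset ℤ) := by
      intro n hn
      simp only [Function.mem_support] at hn
      obtain ⟨-, hn1, -⟩ := hsupp _ _ hn
      have habs : ¬ ((N : ℤ) ≤ |n|) := fun h => hN n h hn1
      have h1 := abs_lt.mp (not_le.mp habs)
      simp only [Finset.coe_image, Set.mem_image, Finset.mem_coe, Finset.mem_range]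
      exact ⟨(n + N).toNat, by omega, by omega⟩
    have hsum : (∑ᶠ n : ℤ, A (c n, c (n + 1))) = φ (c N) - φ (c (-(N : ℤ))) := by
      rw [finsum_eq_sum_of_support_subset _ hsub, Finset.sum_image
        (by intro x _ y _ h; simp only at h; omega)]
      have : ∀ i ∈ Finset.range (2 * N), A (c (a + i), c (a + i + 1)) =
          φ (c (a + (i + 1 : ℕ))) - φ (c (a + i)) := by
        intro i _
        rw [hgrad _ _ (hcadj (a + i)), show a + ((i + 1 : ℕ) : ℤ) = a + i + 1 by push_cast; ring]
      have e1 : a + ((2 * N : ℕ) : ℤ) = (N : ℤ) := by rw [ha]; push_cast; ring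
      have e2 : a + ((0 : ℕ) : ℤ) = -(N : ℤ) := by rw [ha]; push_cast; ring
      rw [Finset.sum_congr rfl this, Finset.sum_range_sub (fun i : ℕ => φ (c (a + i))), e1, e2]
    have hcN : c (N : ℤ) ∉ τ := hN _ (by simp)
    have hcN' : c (-(N : ℤ)) ∉ τ := hN _ (by simp)
    obtain ⟨b1, hb1τ, hb1w, hb1φ⟩ := hbdry _ hcN
    obtain ⟨b0, hb0τ, hb0w, hb0φ⟩ := hbdry _ hcN'
    obtain ⟨w⟩ := hτconn.preconnected ⟨b0, by simpa using hb0τ⟩ ⟨b1, by simpa using hb1τ⟩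
    set ξ : ℕ → V := fun i => (w.getVert i : V) with hξ
    have hξ0 : ξ 0 = b0 := by rw [hξ]; simp [Walk.getVert_zero]
    have hξm : ξ w.length = b1 := by rw [hξ]; simp [Walk.getVert_length]
    have hres := h2 w.length ξ (fun i _ => (w.getVert i).2)
      (fun i hi => w.adj_getVert_succ hi)
      (by rw [hξ0]; exact hb0w) (by rw [hξm]; exact hb1w)
    rw [htel ξ w.length (fun i hi => w.adj_getVert_succ hi), hξ0, hξm] at hres
    rw [hsum, hb1φ, hb0φ]
    exact hres
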